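/- arXiv:0807.1681 — 2 statements merged into one kernel-verified Lean document; each statement's English description precedes it below -/
import Mathlib

section
/- If V : ℝ^d → ℝ is C¹ and z is a saddle of V (i.e. there exists ε > 0 such that the set {y : V(y) < V(z), V̄(y,z) = V(z)} intersected with the ball B_ε(z) is non-empty and not path-connected, while its union with {z} intersected with B_ε(z) is path-connected), then z is a stationary point of V, i.e. ∇V(z) = 0. -/
open Metric Set

/-- Communication height between `x` and `y`: the lowest level `c` such that some
continuous path from `x` to `y` stays below `c`. -/
noncomputable def commHeight {d : ℕ} (V : EuclideanSpace ℝ (Fin d) → ℝ)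
    (x y : EuclideanSpace ℝ (Fin d)) : ℝ :=
  sInf {c : ℝ | ∃ γ : Path x y, ∀ t, V (γ t) ≤ c}

/-- The open valley of `z`. -/
def openValley {d : ℕ} (V : EuclideanSpace ℝ (Fin d) → ℝ)
    (z : EuclideanSpace ℝ (Fin d)) : Set (EuclideanSpace ℝ (Fin d)) :=
  {y | commHeight V y z = V z ∧ V y < V z}

/-- `z` is a saddle of `V` in the valley sense. -/
def IsSaddle {d : ℕ} (V : EuclideanSpace ℝ (Fin d) → ℝ)
    (z : EuclideanSpace ℝ (Fin d)) : Prop :=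
  ∃ ε > 0, (openValley V z ∩ ball z ε).Nonempty ∧
    ¬ IsPathConnected (openValley V z ∩ ball z ε) ∧
    IsPathConnected ((openValley V z ∪ {z}) ∩ ball z ε)

section Aux

variable {d : ℕ} (V : EuclideanSpace ℝ (Fin d) → ℝ) (z y : EuclideanSpace ℝ (Fin d))

lemma cH_set_nonempty (hVc : Continuous V) :
    {c : ℝ | ∃ γ : Path y z, ∀ t, V (γ t) ≤ c}.Nonempty := by
  obtain ⟨γ⟩ := ((convex_univ (𝕜 := ℝ)).isPathConnected ⟨0, trivial⟩ |>.joinedIn y trivial z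
    trivial |>.joined)
  obtain ⟨C, hC⟩ := (isCompact_range (hVc.comp γ.continuous)).bddAbove
  exact ⟨C, γ, fun t => hC ⟨t, rfl⟩⟩

lemma cH_lb : ∀ c ∈ {c : ℝ | ∃ γ : Path y z, ∀ t, V (γ t) ≤ c}, V z ≤ c := by
  rintro c ⟨γ, hγ⟩
  simpa [γ.target] using hγ 1

lemma cH_ge (hVc : Continuous V) : V z ≤ commHeight V y z :=
  le_csInf (cH_set_nonempty V z y hVc) (cH_lb V z y)

lemma cH_path (hVc : Continuous V) (hy : y ∈ openValley V z ∪ {z}) {δ : ℝ} (hδ : 0 < δ) :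
    ∃ p : Path y z, ∀ t, V (p t) ≤ V z + δ := by
  rcases hy with hy | hy
  · have h1 : commHeight V y z < V z + δ := hy.1.le.trans_lt (by linarith)
    have := (csInf_lt_iff ⟨V z, cH_lb V z y⟩ (cH_set_nonempty V z y hVc)).1 h1
    obtain ⟨c, ⟨p, hp⟩, hc⟩ := this
    exact ⟨p, fun t => (hp t).trans hc.le⟩
  · simp only [mem_singleton_iff] at hy
    subst hy
    exact ⟨Path.refl y, fun t => by show V y ≤ V y + δ; linarith⟩

lemma cH_eq (hVc : Continuous V) (w : EuclideanSpace ℝ (Fin d)) (hy : y ∈ openValley V z ∪ {z})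
    (q : Path w y) (hq : ∀ t, V (q t) ≤ V z) : commHeight V w z = V z := by
  refine le_antisymm (le_of_forall_pos_le_add ?_) (cH_ge V z w hVc)
  intro δ hδ
  obtain ⟨p, hp⟩ := cH_path V z y hVc hy hδ
  refine csInf_le ⟨V z, cH_lb V z w⟩ ⟨q.trans p, fun t => ?_⟩
  have : (q.trans p) t ∈ range q ∪ range p := by
    rw [← Path.trans_range]; exact ⟨t, rfl⟩
  rcases this with ⟨u, hu⟩ | ⟨u, hu⟩
  · rw [← hu]; linarith [hq u]
  · rw [← hu]; exact hp u

lemma descent (hV : ContDiff ℝ 1 V) (g : EuclideanSpace ℝ (Fin d)) (c r : ℝ)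
    (hc : ∀ w ∈ closedBall z r, c ≤ fderiv ℝ V w g) (t : ℝ) (ht : 0 ≤ t)
    (hy : ∀ u ∈ Icc (0:ℝ) t, y - u • g ∈ closedBall z r) :
    V (y - t • g) ≤ V y - t * c := by
  have hdV := hV.differentiable one_ne_zero
  set f : ℝ → ℝ := fun τ => V (y - τ • g) + τ * c with hf
  have hder : ∀ τ : ℝ, HasDerivAt f (fderiv ℝ V (y - τ • g) (-g) + c) τ := by
    intro τ
    have hφ : HasDerivAt (fun τ : ℝ => y - τ • g) (-g) τ := by
      simpa using ((hasDerivAt_id τ).smul_const g).const_sub y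
    have h1 : HasDerivAt (fun τ : ℝ => V (y - τ • g)) (fderiv ℝ V (y - τ • g) (-g)) τ :=
      (hdV (y - τ • g)).hasFDerivAt.comp_hasDerivAt τ hφ
    have h2 : HasDerivAt (fun τ : ℝ => τ * c) c τ := by simpa using (hasDerivAt_id τ).mul_const c
    exact h1.add h2
  have hanti : AntitoneOn f (Icc 0 t) := by
    apply antitoneOn_of_deriv_nonpos (convex_Icc 0 t)
    · exact fun x _ => ((hder x).continuousAt).continuousWithinAt
    · exact fun x _ => (hder x).differentiableAt.differentiableWithinAt
    · intro x hx
      rw [(hder x).deriv]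
      have hxm : x ∈ Icc (0:ℝ) t := Ioo_subset_Icc_self (by rwa [interior_Icc] at hx)
      have h3 := hc _ (hy x hxm)
      have h4 : (fderiv ℝ V (y - x • g)) (-g) ≤ -c := by
        rw [map_neg]; linarith
      linarith
  have := hanti (left_mem_Icc.2 ht) (right_mem_Icc.2 ht) ht
  simp only [hf, zero_smul, sub_zero, zero_mul, add_zero] at this
  linarith

end Aux

set_option maxHeartbeats 1000000 in
/-- If `V` is `C¹` and `z` is a saddle, then `z` is a stationary point. -/
theorem saddle_is_stationary {d : ℕ} (V : EuclideanSpace ℝ (Fin d) → ℝ)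
    (hV : ContDiff ℝ 1 V) (z : EuclideanSpace ℝ (Fin d)) (hz : IsSaddle V z) :
    fderiv ℝ V z = 0 := by
  by_contra hL
  obtain ⟨ε, hε, hne, hnc, hpc⟩ := hz
  have hVc : Continuous V := hV.continuous
  set L := fderiv ℝ V z with hLdef
  set g : EuclideanSpace ℝ (Fin d) := (InnerProductSpace.toDual ℝ _).symm L with hgdef
  have hgL : ∀ v, L v = inner ℝ g v := fun v => (InnerProductSpace.toDual_symm_apply).symm
  have hg0 : g ≠ 0 := by
    intro h
    apply hL
    have := congrArg (InnerProductSpace.toDual ℝ (EuclideanSpace ℝ (Fin d))) h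
    simpa [hgdef] using this
  have hgnorm : 0 < ‖g‖ := norm_pos_iff.2 hg0
  set c : ℝ := ‖g‖ ^ 2 with hcdef
  have hc0 : 0 < c := by positivity
  have hLg : fderiv ℝ V z g = c := by rw [← hLdef, hgL, real_inner_self_eq_norm_sq]
  -- choose r
  have hcont : Continuous (fun w => fderiv ℝ V w g) :=
    (hV.continuous_fderiv one_ne_zero).clm_apply continuous_const
  have hopen : IsOpen {w | c / 2 < fderiv ℝ V w g} := isOpen_lt continuous_const hcont
  obtain ⟨r0, hr0, hball⟩ := Metric.isOpen_iff.1 hopen z (by simp only [mem_setOf_eq, hLg]; linarith)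
  set r : ℝ := min (r0 / 2) (ε / 2) with hrdef
  have hr : 0 < r := lt_min (by linarith) (by linarith)
  have hrε : r < ε := (min_le_right _ _).trans_lt (by linarith)
  have hcb : ∀ w ∈ closedBall z r, c / 2 ≤ fderiv ℝ V w g := by
    intro w hw
    have : w ∈ ball z r0 := by
      have := mem_closedBall.1 hw
      have h2 : r < r0 := (min_le_left _ _).trans_lt (by linarith)
      exact mem_ball.2 (by linarith)
    exact (hball this).le
  set s : ℝ := r / (2 * ‖g‖) with hsdef
  have hs : 0 < s := by positivity
  have hsg : s * ‖g‖ = r / 2 := by rw [hsdef, div_mul_eq_mul_div, mul_div_mul_right _ _ hgnorm.ne']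
  -- cutoff
  set ψ : ℝ → ℝ := fun u => max 0 (1 - 2 * u / r) with hψdef
  have hψcont : Continuous ψ := continuous_const.max (by fun_prop)
  have hψ0 : ∀ u, 0 ≤ ψ u := fun u => le_max_left _ _
  have hψ1 : ∀ u, 0 ≤ u → ψ u ≤ 1 := by
    intro u hu
    apply max_le (by norm_num)
    have : 0 ≤ 2 * u / r := by positivity
    linarith
  have hψpos : ∀ u, 0 < ψ u → u < r / 2 := by
    intro u hu
    by_contra hcon
    push_neg at hcon
    have : 1 - 2 * u / r ≤ 0 := by
      rw [sub_nonpos, le_div_iff₀ hr]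
      linarith
    simp only [hψdef, max_eq_left this, lt_irrefl] at hu
  have hψz : ψ 0 = 1 := by simp [hψdef]
  set T := openValley V z ∩ ball z ε with hT
  -- key membership lemma
  have hmem : ∀ y ∈ openValley V z ∪ {z}, dist y z < ε → ∀ t, 0 ≤ t →
      t ≤ s * ψ (dist y z) → (y ∈ openValley V z ∨ 0 < t) → y - t • g ∈ T := by
    intro y hy hyε t ht0 hts hcase
    obtain rfl | htpos := ht0.eq_or_lt
    · simp only [zero_smul, sub_zero]
      exact ⟨hcase.resolve_right (lt_irrefl 0), mem_ball.2 hyε⟩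
    · have hψy : 0 < ψ (dist y z) := by
        by_contra hcon
        push_neg at hcon
        have : ψ (dist y z) = 0 := le_antisymm hcon (hψ0 _)
        rw [this, mul_zero] at hts
        linarith
      have hyr : dist y z < r / 2 := hψpos _ hψy
      have htls : t ≤ s := hts.trans (by nlinarith [hψ1 (dist y z) dist_nonneg])
      have hseg : ∀ u ∈ Icc (0:ℝ) t, y - u • g ∈ closedBall z r := by
        intro u hu
        rw [mem_closedBall, dist_eq_norm]
        have h1 : y - u • g - z = y - z - u • g := by abel
        rw [h1]
        have h2 : ‖y - z - u • g‖ ≤ ‖y - z‖ + ‖u • g‖ := norm_sub_le _ _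
        have h3 : ‖u • g‖ = u * ‖g‖ := by
          rw [norm_smul, Real.norm_eq_abs, abs_of_nonneg hu.1]
        have h4 : u * ‖g‖ ≤ s * ‖g‖ :=
          mul_le_mul_of_nonneg_right (hu.2.trans htls) hgnorm.le
        have h5 : ‖y - z‖ < r / 2 := by rw [← dist_eq_norm]; exact hyr
        rw [hsg] at h4
        linarith
      have hVy : V y ≤ V z := by
        rcases hy with hy | hy
        · exact hy.2.le
        · simp only [mem_singleton_iff] at hy; rw [hy]
      have hdesc : ∀ τ, 0 ≤ τ → τ ≤ t → V (y - τ • g) ≤ V y - τ * (c / 2) := by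
        intro τ hτ0 hτt
        exact descent V z y hV g (c / 2) r hcb τ hτ0
          (fun u hu => hseg u ⟨hu.1, hu.2.trans hτt⟩)
      refine ⟨⟨?_, ?_⟩, ?_⟩
      · -- commHeight
        refine cH_eq V z y hVc (y - t • g) hy ⟨⟨fun u => y - ((1 - (u:ℝ)) * t) • g, ?_⟩, ?_, ?_⟩ ?_
        · fun_prop
        · simp
        · simp
        · intro u
          have hu0 : (0:ℝ) ≤ (1 - (u:ℝ)) * t := mul_nonneg (by linarith [u.2.2]) ht0
          have hut : (1 - (u:ℝ)) * t ≤ t := by nlinarith [u.2.1, u.2.2]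
          have hd := hdesc _ hu0 hut
          show V (y - ((1 - (u:ℝ)) * t) • g) ≤ V z
          nlinarith [mul_nonneg hu0 (le_of_lt (by linarith : (0:ℝ) < c / 2))]
      · -- V < V z
        have := hdesc t htpos.le le_rfl
        nlinarith
      · -- ball
        rw [mem_ball, dist_eq_norm]
        have h1 : y - t • g - z = y - z - t • g := by abel
        rw [h1]
        have h2 : ‖y - z - t • g‖ ≤ ‖y - z‖ + ‖t • g‖ := norm_sub_le _ _
        have h3 : ‖t • g‖ = t * ‖g‖ := by
          rw [norm_smul, Real.norm_eq_abs, abs_of_nonneg htpos.le]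
        have h4 : t * ‖g‖ ≤ r / 2 := by rw [← hsg]; exact mul_le_mul_of_nonneg_right htls hgnorm.le
        have h5 : ‖y - z‖ < r / 2 := by rw [← dist_eq_norm]; exact hyr
        linarith
  -- extract two non-joined points
  rw [isPathConnected_iff] at hnc
  push_neg at hnc
  obtain ⟨a, ha, b, hb, hab⟩ := hnc hne
  have ha' : a ∈ (openValley V z ∪ {z}) ∩ ball z ε := ⟨Or.inl ha.1, ha.2⟩
  have hb' : b ∈ (openValley V z ∪ {z}) ∩ ball z ε := ⟨Or.inl hb.1, hb.2⟩
  obtain ⟨γ, hγ⟩ := hpc.joinedIn a ha' b hb'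
  set F : EuclideanSpace ℝ (Fin d) → EuclideanSpace ℝ (Fin d) :=
    fun w => w - (s * ψ (dist w z)) • g with hFdef
  have hFc : Continuous F := by fun_prop
  have hsψ : ∀ y : EuclideanSpace ℝ (Fin d), y ∈ openValley V z ∪ {z} → dist y z < ε →
      F y ∈ T := by
    intro y hy hyε
    refine hmem y hy hyε _ (mul_nonneg hs.le (hψ0 _)) le_rfl ?_
    rcases hy with hy | hy
    · exact Or.inl hy
    · simp only [mem_singleton_iff] at hy
      subst hy
      right
      rw [dist_self, hψz, mul_one]
      exact hs
  -- piece 2 : F a to F b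
  have h2 : JoinedIn T (F a) (F b) := by
    refine ⟨γ.map hFc, fun t => ?_⟩
    have hγt := hγ t
    show F (γ t) ∈ T
    exact hsψ (γ t) hγt.1 (mem_ball.1 hγt.2)
  -- piece 1 : a to F a
  have hseg : ∀ y, y ∈ T → JoinedIn T y (F y) := by
    intro y hy
    refine ⟨⟨⟨fun u => y - ((u : ℝ) * (s * ψ (dist y z))) • g, by fun_prop⟩, by simp, by simp [hFdef]⟩,
      fun u => ?_⟩
    show y - ((u : ℝ) * (s * ψ (dist y z))) • g ∈ T
    refine hmem y (Or.inl hy.1) (mem_ball.1 hy.2) _ ?_ ?_ (Or.inl hy.1)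
    · exact mul_nonneg u.2.1 (mul_nonneg hs.le (hψ0 _))
    · nlinarith [u.2.1, u.2.2, mul_nonneg hs.le (hψ0 (dist y z))]
  exact hab (((hseg a ha).trans h2).trans (hseg b hb).symm)
end

section
/- If V : ℝ^d → ℝ is C² and z is a saddle of V, then the Hessian matrix of V at z has at least one eigenvalue ≤ 0. -/
open Metric Set Filter RealInnerProductSpace Matrix

/-- The Hessian matrix of `V` at `z` in the standard coordinates. -/
noncomputable def hessianMatrix {d : ℕ} (V : EuclideanSpace ℝ (Fin d) → ℝ)
    (z : EuclideanSpace ℝ (Fin d)) : Matrix (Fin d) (Fin d) ℝ :=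
  fun i j => fderiv ℝ (fun x => fderiv ℝ V x (EuclideanSpace.single j 1)) z
    (EuclideanSpace.single i 1)


variable {d : ℕ} {V : EuclideanSpace ℝ (Fin d) → ℝ}

noncomputable def segPath (a b : EuclideanSpace ℝ (Fin d)) : Path a b where
  toFun t := a + (t : ℝ) • (b - a)
  continuous_toFun := by continuity
  source' := by simp
  target' := by simp

lemma commHeight_le {x z : EuclideanSpace ℝ (Fin d)}
    (γ : Path x z) {c : ℝ} (h : ∀ t, V (γ t) ≤ c) : commHeight V x z ≤ c :=
  csInf_le ⟨V z, by rintro b ⟨γ', hγ'⟩; simpa [γ'.target] using hγ' 1⟩ ⟨γ, h⟩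

lemma le_commHeight (hV : Continuous V)
    (x z : EuclideanSpace ℝ (Fin d)) : V z ≤ commHeight V x z := by
  apply le_csInf
  · obtain ⟨t₀, -, ht₀⟩ := isCompact_univ.exists_isMaxOn univ_nonempty
      ((hV.comp (segPath x z).continuous).continuousOn)
    exact ⟨V (segPath x z t₀), segPath x z, fun t => ht₀ (mem_univ t)⟩
  · rintro b ⟨γ, hγ⟩; simpa [γ.target] using hγ 1

lemma hasDerivAt_line (hV : ContDiff ℝ 2 V) (x u : EuclideanSpace ℝ (Fin d)) (τ : ℝ) :
    HasDerivAt (fun s => V (x + s • u)) (fderiv ℝ V (x + τ • u) u) τ := by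
  have h1 : HasDerivAt (fun s : ℝ => x + s • u) u τ := by
    simpa using ((hasDerivAt_id τ).smul_const u).const_add x
  have h2 : HasFDerivAt V (fderiv ℝ V (x + τ • u)) (x + τ • u) :=
    (hV.differentiable (by norm_num) (x + τ • u)).hasFDerivAt
  exact h2.comp_hasDerivAt τ h1

lemma line_le (hV : ContDiff ℝ 2 V) {x u : EuclideanSpace ℝ (Fin d)} {m t t' : ℝ}
    (h : t ≤ t') (hm : ∀ τ ∈ Icc t t', fderiv ℝ V (x + τ • u) u ≤ m) :
    V (x + t' • u) ≤ V (x + t • u) + (t' - t) * m := by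
  rcases eq_or_lt_of_le h with rfl | hlt
  · simp
  obtain ⟨c, hc, hslope⟩ := exists_hasDerivAt_eq_slope (fun s => V (x + s • u))
    (fun s => fderiv ℝ V (x + s • u) u) hlt
    (fun s _ => (hasDerivAt_line hV x u s).continuousAt.continuousWithinAt)
    (fun s _ => hasDerivAt_line hV x u s)
  have hb := hm c (Ioo_subset_Icc_self hc)
  rw [hslope] at hb
  have ht : 0 < t' - t := by linarith
  rw [div_le_iff₀ ht] at hb
  linarith


lemma splice {S : Set (EuclideanSpace ℝ (Fin d))} {z : EuclideanSpace ℝ (Fin d)} {ε δ : ℝ}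
    (hδ : 0 < δ) (hδε : δ ≤ ε) (hzS : z ∉ S)
    (hU : IsPathConnected ((S ∪ {z}) ∩ ball z ε))
    (hH : ∀ a b, a ∈ S → b ∈ S → a ∈ ball z δ → b ∈ ball z δ →
      JoinedIn (S ∩ ball z ε) a b)
    (hne : (S ∩ ball z ε).Nonempty) :
    IsPathConnected (S ∩ ball z ε) := by
  obtain ⟨a₀, ha₀⟩ := hne
  have key : ∀ a b, a ∈ S ∩ ball z ε → b ∈ S ∩ ball z ε → JoinedIn (S ∩ ball z ε) a b := by
    intro a b ha hb
    have haz : a ≠ z := fun h => hzS (h ▸ ha.1)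
    have hbz : b ≠ z := fun h => hzS (h ▸ hb.1)
    obtain ⟨γ, hγ⟩ := hU.joinedIn a ⟨Or.inl ha.1, ha.2⟩ b ⟨Or.inl hb.1, hb.2⟩
    have hmemU : ∀ τ, τ ∈ Icc (0:ℝ) 1 → γ.extend τ ≠ z → γ.extend τ ∈ S ∩ ball z ε := by
      intro τ hτ hne
      rw [γ.extend_apply hτ] at hne ⊢
      rcases (hγ _).1 with h | h
      · exact ⟨h, (hγ _).2⟩
      · exact absurd h hne
    by_cases hzran : ∀ t, γ t ≠ z
    · exact ⟨γ, fun t => by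
        rcases (hγ t).1 with h | h
        · exact ⟨h, (hγ t).2⟩
        · exact absurd h (hzran t)⟩
    push_neg at hzran
    obtain ⟨t₀, ht₀⟩ := hzran
    set K : Set ℝ := Icc (0:ℝ) 1 ∩ γ.extend ⁻¹' closedBall z (δ/2) with hK
    have hKne : K.Nonempty := ⟨t₀, t₀.2, by
      rw [mem_preimage, γ.extend_apply t₀.2, Subtype.coe_eta, ht₀]
      exact mem_closedBall_self (by positivity)⟩
    have hKclosed : IsClosed K :=
      isClosed_Icc.inter (IsClosed.preimage γ.continuous_extend isClosed_closedBall)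
    have hKbdd : BddBelow K := ⟨0, fun t ht => ht.1.1⟩
    have hKbdd' : BddAbove K := ⟨1, fun t ht => ht.1.2⟩
    set t₁ := sInf K with ht₁def
    set t₂ := sSup K with ht₂def
    have ht₁K : t₁ ∈ K := hKclosed.csInf_mem hKne hKbdd
    have ht₂K : t₂ ∈ K := hKclosed.csSup_mem hKne hKbdd'
    set p := γ.extend t₁ with hpdef
    set q := γ.extend t₂ with hqdef
    have hbefore : ∀ τ, τ ∈ Icc (0:ℝ) 1 → τ < t₁ → δ/2 < dist (γ.extend τ) z := by
      intro τ hτ hlt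
      by_contra h
      push_neg at h
      exact absurd (csInf_le hKbdd ⟨hτ, h⟩) (not_le.mpr hlt)
    have hafter : ∀ τ, τ ∈ Icc (0:ℝ) 1 → t₂ < τ → δ/2 < dist (γ.extend τ) z := by
      intro τ hτ hlt
      by_contra h
      push_neg at h
      exact absurd (le_csSup hKbdd' ⟨hτ, h⟩) (not_le.mpr hlt)
    have hpz : p ≠ z := by
      rcases eq_or_lt_of_le ht₁K.1.1 with h0 | h0
      · rw [hpdef, ← h0, γ.extend_zero]; exact haz
      · have hcont : Tendsto (fun τ => dist (γ.extend τ) z) (nhdsWithin t₁ (Iio t₁))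
            (nhds (dist p z)) :=
          ((continuous_dist.comp (γ.continuous_extend.prodMk continuous_const)).tendsto t₁).mono_left
            nhdsWithin_le_nhds
        have hev : ∀ᶠ τ in nhdsWithin t₁ (Iio t₁), δ/2 ≤ dist (γ.extend τ) z := by
          filter_upwards [Ioo_mem_nhdsLT_of_mem (⟨h0, le_refl t₁⟩ : t₁ ∈ Ioc (0:ℝ) t₁)]
            with τ hτ
          exact (hbefore τ ⟨hτ.1.le, hτ.2.le.trans ht₁K.1.2⟩ hτ.2).le
        have : δ/2 ≤ dist p z := ge_of_tendsto hcont hev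
        intro hpz'
        rw [hpz', dist_self] at this
        linarith
    have hqz : q ≠ z := by
      rcases eq_or_lt_of_le ht₂K.1.2 with h1 | h1
      · rw [hqdef, h1, γ.extend_one]; exact hbz
      · have hcont : Tendsto (fun τ => dist (γ.extend τ) z) (nhdsWithin t₂ (Ioi t₂))
            (nhds (dist q z)) :=
          ((continuous_dist.comp (γ.continuous_extend.prodMk continuous_const)).tendsto t₂).mono_left
            nhdsWithin_le_nhds
        have hev : ∀ᶠ τ in nhdsWithin t₂ (Ioi t₂), δ/2 ≤ dist (γ.extend τ) z := by
          filter_upwards [Ioo_mem_nhdsGT_of_mem (⟨le_refl t₂, h1⟩ : t₂ ∈ Ico t₂ (1:ℝ))]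
            with τ hτ
          exact (hafter τ ⟨ht₂K.1.1.trans hτ.1.le, hτ.2.le⟩ hτ.1).le
        have : δ/2 ≤ dist q z := ge_of_tendsto hcont hev
        intro hqz'
        rw [hqz', dist_self] at this
        linarith
    have hpS : p ∈ S ∩ ball z ε := hmemU t₁ ht₁K.1 hpz
    have hqS : q ∈ S ∩ ball z ε := hmemU t₂ ht₂K.1 hqz
    have hpδ : p ∈ ball z δ := lt_of_le_of_lt (mem_closedBall.mp ht₁K.2) (by linarith)
    have hqδ : q ∈ ball z δ := lt_of_le_of_lt (mem_closedBall.mp ht₂K.2) (by linarith)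
    -- three pieces
    have j1 : JoinedIn (S ∩ ball z ε) a p := by
      refine ⟨(γ.truncate 0 t₁).cast (by rw [min_eq_left ht₁K.1.1, γ.extend_zero]) rfl, ?_⟩
      intro s
      show γ.extend (min (max (s:ℝ) 0) t₁) ∈ S ∩ ball z ε
      set τ := min (max (s:ℝ) 0) t₁ with hτdef
      have hτ1 : τ ∈ Icc (0:ℝ) 1 := ⟨le_min (le_max_right _ _) ht₁K.1.1, (min_le_right _ _).trans ht₁K.1.2⟩
      rcases eq_or_lt_of_le (min_le_right (max (s:ℝ) 0) t₁ : τ ≤ t₁) with he | hlt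
      · rw [show τ = t₁ from he]; exact hpS
      · refine hmemU τ hτ1 ?_
        intro hcontra
        have := hbefore τ hτ1 hlt
        rw [hcontra, dist_self] at this
        linarith
    have j3 : JoinedIn (S ∩ ball z ε) q b := by
      refine ⟨(γ.truncate t₂ 1).cast (by rw [min_eq_left ht₂K.1.2]) (by rw [γ.extend_one]), ?_⟩
      intro s
      show γ.extend (min (max (s:ℝ) t₂) 1) ∈ S ∩ ball z ε
      set τ := min (max (s:ℝ) t₂) 1 with hτdef
      have hτ1 : τ ∈ Icc (0:ℝ) 1 :=
        ⟨le_min (le_trans s.2.1 (le_max_left _ _)) zero_le_one, min_le_right _ _⟩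
      have hτ2 : t₂ ≤ τ := le_min (le_max_right _ _) ht₂K.1.2
      rcases eq_or_lt_of_le hτ2 with he | hlt
      · rw [show τ = t₂ from he.symm]; exact hqS
      · refine hmemU τ hτ1 ?_
        intro hcontra
        have := hafter τ hτ1 hlt
        rw [hcontra, dist_self] at this
        linarith
    exact (j1.trans (hH p q hpS.1 hqS.1 hpδ hqδ)).trans j3
  exact ⟨a₀, ha₀, fun {b} hb => key a₀ b ha₀ hb⟩

set_option maxHeartbeats 1000000 in
lemma not_isSaddle_of_fderiv_ne_zero (hV : ContDiff ℝ 2 V)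
    {z : EuclideanSpace ℝ (Fin d)} (hL : fderiv ℝ V z ≠ 0) : ¬ IsSaddle V z := by
  rintro ⟨ε, hε, hne, hnpc, hpc⟩
  set L := fderiv ℝ V z with hLdef
  set c := ‖L‖ with hcdef
  have hc : 0 < c := norm_pos_iff.mpr hL
  set w : EuclideanSpace ℝ (Fin d) := (InnerProductSpace.toDual ℝ _).symm L with hwdef
  have hwnorm : ‖w‖ = c := by rw [hwdef, LinearIsometryEquiv.norm_map]
  set u : EuclideanSpace ℝ (Fin d) := (-(c⁻¹)) • w with hudef
  have hunorm : ‖u‖ = 1 := by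
    rw [hudef, norm_smul, hwnorm, norm_neg, norm_inv, Real.norm_eq_abs, abs_of_pos hc,
      inv_mul_cancel₀ hc.ne']
  have hLu : L u = -c := by
    have h0 : ⟪w, u⟫ = L u := InnerProductSpace.toDual_symm_apply
    rw [← h0, hudef, real_inner_smul_right, real_inner_self_eq_norm_sq, hwnorm]
    field_simp
  -- the fderiv is within c/8 of L on a closed ball of radius r
  have hcont : ContinuousAt (fderiv ℝ V) z :=
    ((hV.fderiv_right (m := 1) (by norm_num)).continuous).continuousAt
  obtain ⟨r₀, hr₀, hr₀close⟩ := Metric.continuousAt_iff.mp hcont (c/8) (by positivity)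
  set r := min (r₀/2) (ε/2) with hrdef
  have hr : 0 < r := lt_min (by positivity) (by positivity)
  have hrε : r < ε := (min_le_right _ _).trans_lt (by linarith)
  have hclose : ∀ x ∈ closedBall z r, ‖fderiv ℝ V x - L‖ ≤ c/8 := by
    intro x hx
    rcases eq_or_ne x z with rfl | hxz
    · simp [hLdef]; positivity
    · have : dist x z < r₀ := lt_of_le_of_lt (mem_closedBall.mp hx)
        ((min_le_left _ _).trans_lt (by linarith))
      have := hr₀close this
      rw [dist_eq_norm] at this
      exact this.le
  set s := r/2 with hsdef
  set δ := r/16 with hδdef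
  have hδ : 0 < δ := by positivity
  have hs : 0 < s := by rw [hsdef]; positivity
  have hδε : δ ≤ ε := by rw [hδdef]; linarith
  have hδs : δ + s ≤ r := by rw [hδdef, hsdef]; linarith
  have hsub' : 2*c*δ < c/2*s := by rw [hδdef, hsdef]; nlinarith [mul_pos hc hr]
  -- derivative along u is ≤ -c/2 on the ball of radius r
  have hderiv : ∀ p ∈ closedBall z r, fderiv ℝ V p u ≤ -c/2 := by
    intro p hp
    have h1 : fderiv ℝ V p u = L u + (fderiv ℝ V p - L) u := by
      simp [ContinuousLinearMap.sub_apply]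
    have h2 : (fderiv ℝ V p - L) u ≤ c/8 := by
      calc (fderiv ℝ V p - L) u ≤ ‖(fderiv ℝ V p - L) u‖ := le_abs_self _
        _ ≤ ‖fderiv ℝ V p - L‖ * ‖u‖ := ContinuousLinearMap.le_opNorm _ _
        _ ≤ c/8 := by rw [hunorm, mul_one]; exact hclose p hp
    rw [h1, hLu]; linarith
  -- key vertical estimate
  have hVert : ∀ x ∈ closedBall z δ, ∀ t t' : ℝ, 0 ≤ t → t ≤ t' → t' ≤ s →
      V (x + t' • u) ≤ V (x + t • u) - c/2 * (t' - t) := by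
    intro x hx t t' ht htt' ht's
    have := line_le hV htt' (m := -c/2) (u := u) (x := x) ?_
    · linarith [this]
    · intro τ hτ
      apply hderiv
      rw [mem_closedBall] at hx ⊢
      calc dist (x + τ • u) z ≤ dist (x + τ • u) x + dist x z := dist_triangle _ _ _
        _ ≤ τ + δ := by
            rw [dist_eq_norm]
            have : x + τ • u - x = τ • u := by module
            rw [this, norm_smul, hunorm, mul_one, Real.norm_eq_abs,
              abs_of_nonneg (ht.trans hτ.1)]
            exact add_le_add le_rfl hx
        _ ≤ r := by
            have : τ ≤ s := hτ.2.trans ht's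
            linarith
  -- horizontal estimate
  have hHoriz : ∀ x ∈ closedBall z δ, V x ≤ V z + 2*c*δ := by
    intro x hx
    have hle : ∀ τ ∈ Icc (0:ℝ) 1, fderiv ℝ V (z + τ • (x - z)) (x - z) ≤ 2*c*δ := by
      intro τ hτ
      have hball : z + τ • (x - z) ∈ closedBall z r := by
        rw [mem_closedBall, dist_eq_norm]
        have : z + τ • (x - z) - z = τ • (x - z) := by module
        rw [this, norm_smul, Real.norm_eq_abs, abs_of_nonneg hτ.1]
        calc τ * ‖x - z‖ ≤ 1 * δ := by
              apply mul_le_mul hτ.2 _ (norm_nonneg _) zero_le_one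
              rw [← dist_eq_norm]; exact mem_closedBall.mp hx
          _ ≤ r := by rw [hδdef]; linarith
      have hnorm : ‖fderiv ℝ V (z + τ • (x - z))‖ ≤ c + c/8 := by
        calc ‖fderiv ℝ V (z + τ • (x - z))‖
            ≤ ‖L‖ + ‖fderiv ℝ V (z + τ • (x - z)) - L‖ := by
              have := norm_add_le L (fderiv ℝ V (z + τ • (x - z)) - L)
              simpa using this
          _ ≤ c + c/8 := add_le_add le_rfl (hclose _ hball)
      calc fderiv ℝ V (z + τ • (x - z)) (x - z)
          ≤ ‖fderiv ℝ V (z + τ • (x - z)) (x - z)‖ := le_abs_self _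
        _ ≤ ‖fderiv ℝ V (z + τ • (x - z))‖ * ‖x - z‖ := ContinuousLinearMap.le_opNorm _ _
        _ ≤ (c + c/8) * δ := by
            apply mul_le_mul hnorm _ (norm_nonneg _) (by positivity)
            rw [← dist_eq_norm]; exact mem_closedBall.mp hx
        _ ≤ 2*c*δ := by nlinarith
    have := line_le hV (zero_le_one) hle (x := z) (u := x - z)
    simpa using this
  clear_value L c w u r s δ
  have hzδ : z ∈ closedBall z δ := mem_closedBall_self hδ.le
  have hSub : ∀ x ∈ closedBall z δ, V (x + s • u) < V z := by
    intro x hx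
    have h1 := hVert x hx 0 s le_rfl (by positivity) le_rfl
    have h2 := hHoriz x hx
    simp only [zero_smul, add_zero] at h1
    linarith
  have hballε : ∀ x ∈ closedBall z δ, ∀ t : ℝ, 0 ≤ t → t ≤ s → x + t • u ∈ ball z ε := by
    intro x hx t ht hts
    rw [mem_ball]
    calc dist (x + t • u) z ≤ dist (x + t • u) x + dist x z := dist_triangle _ _ _
      _ ≤ t + δ := by
          rw [dist_eq_norm]
          have he : x + t • u - x = t • u := by module
          rw [he, norm_smul, hunorm, mul_one, Real.norm_eq_abs, abs_of_nonneg ht]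
          exact add_le_add le_rfl (mem_closedBall.mp hx)
      _ ≤ r := by linarith
      _ < ε := hrε
  have hOV : ∀ x ∈ closedBall z δ, ∀ t : ℝ, 0 ≤ t → t ≤ s → V (x + t • u) < V z →
      x + t • u ∈ openValley V z ∩ ball z ε := by
    intro x hx t ht hts hlt
    refine ⟨⟨le_antisymm ?_ (le_commHeight hV.continuous _ z), hlt⟩, hballε x hx t ht hts⟩
    set A := x + t • u with hA
    set B := x + s • u with hB
    set C := z + s • u with hC
    set Γ := (segPath A B).trans ((segPath B C).trans (segPath C z)) with hΓ
    refine commHeight_le Γ ?_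
    have hrange : ∀ y ∈ range Γ, V y ≤ V z := by
      rw [hΓ, Path.trans_range, Path.trans_range]
      rintro y (⟨τ, rfl⟩ | ⟨τ, rfl⟩ | ⟨τ, rfl⟩)
      · -- first segment
        show V (A + (τ:ℝ) • (B - A)) ≤ V z
        have he : A + (τ:ℝ) • (B - A) = x + (t + τ * (s - t)) • u := by
          rw [hA, hB]; module
        rw [he]
        have h1 : t ≤ t + τ * (s - t) := by nlinarith [τ.2.1, τ.2.2]
        have h2 : t + τ * (s - t) ≤ s := by nlinarith [τ.2.1, τ.2.2]
        have := hVert x hx t (t + τ * (s - t)) ht h1 h2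
        have hc2 : (0:ℝ) ≤ c/2 * (t + τ * (s - t) - t) := by nlinarith [τ.2.1, τ.2.2]
        linarith
      · -- middle segment
        show V (B + (τ:ℝ) • (C - B)) ≤ V z
        have he : B + (τ:ℝ) • (C - B) = (x + (τ:ℝ) • (z - x)) + s • u := by
          rw [hB, hC]; module
        rw [he]
        have hw : x + (τ:ℝ) • (z - x) ∈ closedBall z δ := by
          rw [mem_closedBall, dist_eq_norm]
          have he2 : x + (τ:ℝ) • (z - x) - z = (1 - (τ:ℝ)) • (x - z) := by module
          rw [he2, norm_smul, Real.norm_eq_abs, abs_of_nonneg (by linarith [τ.2.2])]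
          calc (1 - (τ:ℝ)) * ‖x - z‖ ≤ 1 * δ := by
                have := mem_closedBall.mp hx
                rw [dist_eq_norm] at this
                apply mul_le_mul (by linarith [τ.2.1]) this (norm_nonneg _) zero_le_one
            _ = δ := one_mul δ
        exact (hSub _ hw).le
      · -- last segment
        show V (C + (τ:ℝ) • (z - C)) ≤ V z
        have he : C + (τ:ℝ) • (z - C) = z + ((1 - (τ:ℝ)) * s) • u := by
          rw [hC]; module
        rw [he]
        have h1 : (0:ℝ) ≤ (1 - (τ:ℝ)) * s := by nlinarith [τ.2.2, hs]
        have h2 : (1 - (τ:ℝ)) * s ≤ s := by nlinarith [τ.2.1, hs]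
        have := hVert z hzδ 0 ((1 - (τ:ℝ)) * s) le_rfl h1 h2
        simp only [zero_smul, add_zero] at this
        nlinarith
    exact fun τ => hrange _ (mem_range_self τ)
  -- joining points of the valley near z
  have hJoin : ∀ a b, a ∈ openValley V z → b ∈ openValley V z → a ∈ ball z δ →
      b ∈ ball z δ → JoinedIn (openValley V z ∩ ball z ε) a b := by
    have hseg : ∀ x ∈ closedBall z δ, V x < V z →
        JoinedIn (openValley V z ∩ ball z ε) x (x + s • u) := by
      intro x hx hVx
      refine ⟨segPath x (x + s • u), fun τ => ?_⟩
      have he : x + (τ:ℝ) • (x + s • u - x) = x + ((τ:ℝ) * s) • u := by module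
      show (x + (τ:ℝ) • (x + s • u - x)) ∈ _
      rw [he]
      have h1 : (0:ℝ) ≤ (τ:ℝ) * s := by nlinarith [τ.2.1, hs]
      have h2 : (τ:ℝ) * s ≤ s := by nlinarith [τ.2.2, hs]
      have h3 := hVert x hx 0 ((τ:ℝ) * s) le_rfl h1 h2
      simp only [zero_smul, add_zero] at h3
      have hc2 : (0:ℝ) ≤ c/2 * ((τ:ℝ) * s - 0) := mul_nonneg (by linarith) (by linarith)
      exact hOV x hx _ h1 h2 (by linarith)
    intro a b ha hb haδ hbδ
    have haδ' := ball_subset_closedBall haδ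
    have hbδ' := ball_subset_closedBall hbδ
    have J1 := hseg a haδ' ha.2
    have J3 := hseg b hbδ' hb.2
    have J2 : JoinedIn (openValley V z ∩ ball z ε) (a + s • u) (b + s • u) := by
      refine ⟨segPath (a + s • u) (b + s • u), fun τ => ?_⟩
      have he : (a + s • u) + (τ:ℝ) • ((b + s • u) - (a + s • u))
          = (a + (τ:ℝ) • (b - a)) + s • u := by module
      show ((a + s • u) + (τ:ℝ) • ((b + s • u) - (a + s • u))) ∈ _
      rw [he]
      have hw : a + (τ:ℝ) • (b - a) ∈ closedBall z δ := by
        have : a + (τ:ℝ) • (b - a) = (1 - (τ:ℝ)) • a + (τ:ℝ) • b := by module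
        rw [this]
        exact ball_subset_closedBall
          ((convex_ball z δ) haδ hbδ (by linarith [τ.2.2]) τ.2.1 (by ring))
      exact hOV _ hw s hs.le le_rfl (hSub _ hw)
    exact (J1.trans J2).trans J3.symm
  -- contradiction with non-path-connectedness via splicing
  have hzOV : z ∉ openValley V z := fun h => lt_irrefl _ h.2
  exact hnpc (splice hδ hδε hzOV hpc hJoin hne)

lemma commSet_nonempty (hV : Continuous V) (x z : EuclideanSpace ℝ (Fin d)) :
    {c : ℝ | ∃ γ : Path x z, ∀ t, V (γ t) ≤ c}.Nonempty := by
  obtain ⟨t₀, -, ht₀⟩ := isCompact_univ.exists_isMaxOn univ_nonempty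
    ((hV.comp (segPath x z).continuous).continuousOn)
  exact ⟨V (segPath x z t₀), segPath x z, fun t => ht₀ (mem_univ t)⟩


lemma hess_eq (hV : ContDiff ℝ 2 V) (z : EuclideanSpace ℝ (Fin d)) (i j : Fin d) :
    hessianMatrix V z i j
      = fderiv ℝ (fderiv ℝ V) z (EuclideanSpace.single i 1) (EuclideanSpace.single j 1) := by
  have hdiff : DifferentiableAt ℝ (fderiv ℝ V) z :=
    ((hV.fderiv_right (m := 1) (by norm_num)).differentiable one_ne_zero) z
  show fderiv ℝ (fun x => fderiv ℝ V x (EuclideanSpace.single j 1)) z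
      (EuclideanSpace.single i 1) = _
  rw [fderiv_clm_apply hdiff (differentiableAt_const _)]
  simp

lemma hess_symm (hV : ContDiff ℝ 2 V) (z : EuclideanSpace ℝ (Fin d)) :
    (hessianMatrix V z).IsHermitian := by
  have hsymm : IsSymmSndFDerivAt ℝ V z := hV.contDiffAt.isSymmSndFDerivAt (by norm_num)
  apply Matrix.ext
  intro i j
  rw [Matrix.conjTranspose_apply, star_trivial, hess_eq hV, hess_eq hV]
  exact hsymm _ _

lemma posQ (hV : ContDiff ℝ 2 V) (z : EuclideanSpace ℝ (Fin d))
    (hall : ∀ i, 0 < (hess_symm hV z).eigenvalues i) :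
    ∀ w : Fin d → ℝ, w ≠ 0 → 0 < w ⬝ᵥ ((hessianMatrix V z) *ᵥ w) := by
  intro w hw
  set hH := hess_symm hV z
  set H := hessianMatrix V z with hHdef
  set U : Matrix (Fin d) (Fin d) ℝ := (Matrix.IsHermitian.eigenvectorUnitary hH : Matrix (Fin d) (Fin d) ℝ) with hUdef
  have hUU : U * star U = 1 := (Matrix.mem_unitaryGroup_iff).mp (Matrix.IsHermitian.eigenvectorUnitary hH).2
  set y := star U *ᵥ w with hydef
  have hUy : U *ᵥ y = w := by
    rw [hydef, Matrix.mulVec_mulVec, hUU, Matrix.one_mulVec]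
  have hyne : y ≠ 0 := by
    intro h
    rw [h, Matrix.mulVec_zero] at hUy
    exact hw hUy.symm
  have hspec := hH.spectral_theorem
  have hvecMul : Matrix.vecMul w U = y := by
    funext j
    simp only [hydef, Matrix.vecMul, Matrix.mulVec, dotProduct,
      Matrix.conjTranspose_apply, star_trivial, Matrix.star_apply, mul_comm]
  have hQ : w ⬝ᵥ (H *ᵥ w) = ∑ i, hH.eigenvalues i * (y i)^2 := by
    calc w ⬝ᵥ (H *ᵥ w)
        = w ⬝ᵥ ((U * (Matrix.diagonal (RCLike.ofReal ∘ hH.eigenvalues) * star U)) *ᵥ w) := by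
          rw [← Matrix.mul_assoc]; exact congrArg (fun M => w ⬝ᵥ M *ᵥ w) hspec
      _ = w ⬝ᵥ (U *ᵥ ((Matrix.diagonal (RCLike.ofReal ∘ hH.eigenvalues)) *ᵥ y)) := by
          rw [← Matrix.mulVec_mulVec, ← Matrix.mulVec_mulVec]
      _ = y ⬝ᵥ ((Matrix.diagonal (RCLike.ofReal ∘ hH.eigenvalues)) *ᵥ y) := by
          rw [dotProduct_mulVec, hvecMul]
      _ = ∑ i, hH.eigenvalues i * (y i)^2 := by
          simp only [Matrix.mulVec_diagonal, dotProduct, Function.comp_apply,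
            RCLike.ofReal_real_eq_id, id_eq]
          exact Finset.sum_congr rfl fun i _ => by ring
  rw [hQ]
  obtain ⟨i₀, hi₀⟩ := Function.ne_iff.mp hyne
  apply Finset.sum_pos'
  · intro i _
    exact mul_nonneg (hall i).le (sq_nonneg _)
  · exact ⟨i₀, Finset.mem_univ _, mul_pos (hall i₀)
      (lt_of_le_of_ne (sq_nonneg _) (Ne.symm (pow_ne_zero 2 hi₀)))⟩

lemma repr_single (v : EuclideanSpace ℝ (Fin d)) :
    v = ∑ i, v i • EuclideanSpace.single i (1:ℝ) := by
  have := (EuclideanSpace.basisFun (Fin d) ℝ).toBasis.sum_repr v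
  simp only [EuclideanSpace.basisFun_repr, OrthonormalBasis.coe_toBasis_repr_apply,
    OrthonormalBasis.coe_toBasis, EuclideanSpace.basisFun_apply] at this
  exact this.symm

lemma quad_eq (hV : ContDiff ℝ 2 V) (z : EuclideanSpace ℝ (Fin d))
    (v : EuclideanSpace ℝ (Fin d)) :
    fderiv ℝ (fderiv ℝ V) z v v = (⇑v : Fin d → ℝ) ⬝ᵥ ((hessianMatrix V z) *ᵥ (⇑v : Fin d → ℝ)) := by
  set B := fderiv ℝ (fderiv ℝ V) z with hBdef
  have h := repr_single v
  have lhs_eq : B v v = ∑ i, ∑ j, v i * v j *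
      B (EuclideanSpace.single i 1) (EuclideanSpace.single j 1) := by
    conv_lhs => rw [h]
    simp only [map_sum, _root_.map_smul, ContinuousLinearMap.sum_apply,
      ContinuousLinearMap.smul_apply, ContinuousLinearMap.coe_sum', Finset.sum_apply,
      smul_eq_mul, Finset.mul_sum]
    rw [Finset.sum_comm]
    exact Finset.sum_congr rfl fun i _ => Finset.sum_congr rfl fun j _ => by ring
  rw [lhs_eq]
  simp only [dotProduct, Matrix.mulVec, Finset.mul_sum]
  refine Finset.sum_congr rfl fun i _ => Finset.sum_congr rfl fun j _ => ?_
  rw [hess_eq hV]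
  ring

set_option maxHeartbeats 1000000 in
lemma not_isSaddle_of_localmin (hd : 0 < d) (hV : ContDiff ℝ 2 V)
    {z : EuclideanSpace ℝ (Fin d)} (hL : fderiv ℝ V z = 0)
    (hpos : ∀ v : EuclideanSpace ℝ (Fin d), v ≠ 0 → 0 < fderiv ℝ (fderiv ℝ V) z v v) :
    ¬ IsSaddle V z := by
  rintro ⟨ε, hε, ⟨y, hyOV, hyball⟩, hnpc, hpc⟩
  set B := fderiv ℝ (fderiv ℝ V) z with hBdef
  -- uniform lower bound for the quadratic form
  have hsphne : (sphere (0 : EuclideanSpace ℝ (Fin d)) 1).Nonempty := by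
    refine ⟨EuclideanSpace.single ⟨0, hd⟩ 1, ?_⟩
    simp [EuclideanSpace.norm_single]
  have hContQ : Continuous fun v : EuclideanSpace ℝ (Fin d) => B v v :=
    B.continuous.clm_apply continuous_id
  obtain ⟨v₀, hv₀s, hv₀min⟩ :=
    (isCompact_sphere (0 : EuclideanSpace ℝ (Fin d)) 1).exists_isMinOn hsphne hContQ.continuousOn
  set c₀ := B v₀ v₀ with hc₀def
  have hv₀ne : v₀ ≠ 0 := by
    intro h
    rw [mem_sphere, h, dist_self] at hv₀s
    norm_num at hv₀s
  have hc₀ : 0 < c₀ := hpos v₀ hv₀ne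
  have hlow : ∀ h : EuclideanSpace ℝ (Fin d), c₀ * ‖h‖^2 ≤ B h h := by
    intro h
    rcases eq_or_ne h 0 with rfl | hne
    · simp
    · have hn : (0:ℝ) < ‖h‖ := norm_pos_iff.mpr hne
      have hu : (‖h‖⁻¹ • h) ∈ sphere (0 : EuclideanSpace ℝ (Fin d)) 1 := by
        rw [mem_sphere, dist_zero_right, norm_smul, norm_inv, norm_norm,
          inv_mul_cancel₀ hn.ne']
      have hexp : B (‖h‖⁻¹ • h) (‖h‖⁻¹ • h) = ‖h‖⁻¹ * (‖h‖⁻¹ * (B h h)) := by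
        rw [_root_.map_smul, _root_.map_smul, ContinuousLinearMap.smul_apply]
        simp only [smul_eq_mul]
      have h2 : c₀ ≤ ‖h‖⁻¹ * (‖h‖⁻¹ * (B h h)) := by
        have h2' := hv₀min hu
        simp only [Set.mem_setOf_eq] at h2'
        rwa [hexp] at h2'
      have h3 : c₀ * ‖h‖^2 ≤ ‖h‖⁻¹ * (‖h‖⁻¹ * (B h h)) * ‖h‖^2 :=
        mul_le_mul_of_nonneg_right h2 (sq_nonneg _)
      calc c₀ * ‖h‖^2 ≤ ‖h‖⁻¹ * (‖h‖⁻¹ * (B h h)) * ‖h‖^2 := h3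
        _ = B h h := by rw [pow_two]; field_simp
  -- second derivative close to B near z
  have hcont2 : ContinuousAt (fun x => fderiv ℝ (fderiv ℝ V) x) z :=
    ((hV.fderiv_right (m := 1) (by norm_num)).continuous_fderiv one_ne_zero).continuousAt
  obtain ⟨r₁, hr₁, hr₁c⟩ := (Metric.continuousAt_iff (f := fun x => fderiv ℝ (fderiv ℝ V) x) (a := z)).mp hcont2 (c₀/2) (by positivity)
  set ρ := r₁/2 with hρdef
  have hρ : 0 < ρ := by positivity
  have hρr : ρ < r₁ := by rw [hρdef]; linarith
  clear_value B c₀ ρ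
  have hclose : ∀ x ∈ closedBall z ρ, ‖fderiv ℝ (fderiv ℝ V) x - B‖ ≤ c₀/2 := by
    intro x hx
    have hd2 : dist x z < r₁ := lt_of_le_of_lt (mem_closedBall.mp hx) hρr
    have h5 : dist (fderiv ℝ (fderiv ℝ V) x) (fderiv ℝ (fderiv ℝ V) z) < c₀/2 := hr₁c hd2
    rw [dist_eq_norm (E := EuclideanSpace ℝ (Fin d) →L[ℝ] EuclideanSpace ℝ (Fin d) →L[ℝ] ℝ)] at h5
    rw [hBdef]
    exact h5.le
  have hquad : ∀ x ∈ closedBall z ρ, ∀ h : EuclideanSpace ℝ (Fin d),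
      c₀/2 * ‖h‖^2 ≤ fderiv ℝ (fderiv ℝ V) x h h := by
    intro x hx h
    have hnorm : ‖(fderiv ℝ (fderiv ℝ V) x - B) h h‖ ≤ c₀/2 * ‖h‖^2 := by
      calc ‖(fderiv ℝ (fderiv ℝ V) x - B) h h‖
          ≤ ‖(fderiv ℝ (fderiv ℝ V) x - B) h‖ * ‖h‖ := ContinuousLinearMap.le_opNorm _ _
        _ ≤ (‖fderiv ℝ (fderiv ℝ V) x - B‖ * ‖h‖) * ‖h‖ :=
            mul_le_mul_of_nonneg_right (ContinuousLinearMap.le_opNorm _ _) (norm_nonneg _)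
        _ ≤ (c₀/2 * ‖h‖) * ‖h‖ :=
            mul_le_mul_of_nonneg_right
              (mul_le_mul_of_nonneg_right (hclose x hx) (norm_nonneg _)) (norm_nonneg _)
        _ = c₀/2 * ‖h‖^2 := by ring
    have h1 : |(fderiv ℝ (fderiv ℝ V) x - B) h h| ≤ c₀/2 * ‖h‖^2 := by
      rwa [Real.norm_eq_abs] at hnorm
    have h2 : (fderiv ℝ (fderiv ℝ V) x - B) h h = fderiv ℝ (fderiv ℝ V) x h h - B h h := by
      simp [ContinuousLinearMap.sub_apply]
    have h3 := hlow h
    have h4 := abs_le.mp h1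
    rw [h2] at h4
    linarith [h4.1]
  -- strict local minimum
  have hmin : ∀ h : EuclideanSpace ℝ (Fin d), h ≠ 0 → ‖h‖ ≤ ρ → V z < V (z + h) := by
    intro h hne hle
    have hφderiv : ∀ τ : ℝ, HasDerivAt (fun s => fderiv ℝ V (z + s • h) h)
        (fderiv ℝ (fderiv ℝ V) (z + τ • h) h h) τ := by
      intro τ
      have hline : HasDerivAt (fun s : ℝ => z + s • h) h τ := by
        simpa using ((hasDerivAt_id τ).smul_const h).const_add z
      have hD : HasFDerivAt (fderiv ℝ V) (fderiv ℝ (fderiv ℝ V) (z + τ • h)) (z + τ • h) :=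
        (((hV.fderiv_right (m := 1) (by norm_num)).differentiable one_ne_zero) _).hasFDerivAt
      have hcomp : HasDerivAt (fun s : ℝ => fderiv ℝ V (z + s • h))
          (fderiv ℝ (fderiv ℝ V) (z + τ • h) h) τ := hD.comp_hasDerivAt τ hline
      have := hcomp.clm_apply (hasDerivAt_const τ h)
      simpa using this
    obtain ⟨θ, hθ, hθeq⟩ := exists_hasDerivAt_eq_slope (fun s => V (z + s • h))
      (fun s => fderiv ℝ V (z + s • h) h) one_pos
      (fun s _ => (hasDerivAt_line hV z h s).continuousAt.continuousWithinAt)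
      (fun s _ => hasDerivAt_line hV z h s)
    obtain ⟨σ, hσ, hσeq⟩ := exists_hasDerivAt_eq_slope (fun s => fderiv ℝ V (z + s • h) h)
      (fun s => fderiv ℝ (fderiv ℝ V) (z + s • h) h h) hθ.1
      (fun s _ => (hφderiv s).continuousAt.continuousWithinAt)
      (fun s _ => hφderiv s)
    have hφ0 : fderiv ℝ V (z + (0:ℝ) • h) h = 0 := by simp [hL]
    have hball : z + σ • h ∈ closedBall z ρ := by
      rw [mem_closedBall, dist_eq_norm]
      have he : z + σ • h - z = σ • h := by module
      rw [he, norm_smul, Real.norm_eq_abs, abs_of_nonneg hσ.1.le]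
      calc σ * ‖h‖ ≤ 1 * ‖h‖ := by
            apply mul_le_mul_of_nonneg_right _ (norm_nonneg _)
            linarith [hσ.2, hθ.2]
        _ ≤ ρ := by rw [one_mul]; exact hle
    have hq := hquad _ hball h
    rw [hσeq] at hq
    simp only [sub_zero, hφ0] at hq
    have hθpos : 0 < θ := hθ.1
    rw [le_div_iff₀ hθpos] at hq
    have hnpos : (0:ℝ) < ‖h‖ := norm_pos_iff.mpr hne
    have hφθpos : 0 < fderiv ℝ V (z + θ • h) h := by
      have hlhs : 0 < c₀/2 * ‖h‖^2 * θ :=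
        mul_pos (mul_pos (by linarith) (pow_pos hnpos 2)) hθpos
      linarith
    rw [hθeq] at hφθpos
    simp only [sub_zero, div_one, one_smul, zero_smul, add_zero] at hφθpos
    linarith
  -- derive contradiction
  have hVyz : V y < V z := hyOV.2
  rcases le_or_gt (dist y z) ρ with hyr | hyr
  · have hyz : y ≠ z := fun he => absurd (he ▸ hVyz) (lt_irrefl _)
    have := hmin (y - z) (sub_ne_zero.mpr hyz) (by rw [← dist_eq_norm]; exact hyr)
    have he : z + (y - z) = y := by module
    rw [he] at this
    linarith
  · have hsph2 : (sphere z ρ).Nonempty := by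
      refine ⟨z + ρ • EuclideanSpace.single ⟨0, hd⟩ 1, ?_⟩
      rw [mem_sphere, dist_eq_norm]
      have he : z + ρ • EuclideanSpace.single ⟨0, hd⟩ (1:ℝ) - z
          = ρ • EuclideanSpace.single ⟨0, hd⟩ (1:ℝ) := by module
      rw [he, norm_smul, Real.norm_eq_abs, abs_of_pos hρ, EuclideanSpace.norm_single]
      simp
    obtain ⟨x₁, hx₁, hx₁min⟩ := (isCompact_sphere z ρ).exists_isMinOn hsph2
      hV.continuous.continuousOn
    have hx₁z : x₁ ≠ z := by
      intro he
      rw [mem_sphere, he, dist_self] at hx₁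
      exact hρ.ne hx₁
    have hm : V z < V x₁ := by
      have := hmin (x₁ - z) (sub_ne_zero.mpr hx₁z)
        (by rw [← dist_eq_norm]; exact (mem_sphere.mp hx₁).le)
      have he : z + (x₁ - z) = x₁ := by module
      rwa [he] at this
    have hch : V x₁ ≤ commHeight V y z := by
      apply le_csInf (commSet_nonempty hV.continuous y z)
      rintro b ⟨γ, hγ⟩
      have hF : ContinuousOn (fun τ => dist (γ.extend τ) z) (Icc (0:ℝ) 1) :=
        (continuous_dist.comp (γ.continuous_extend.prodMk continuous_const)).continuousOn
      have himg := intermediate_value_Icc' (zero_le_one (α := ℝ)) hF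
      have hedge : ρ ∈ Icc (dist (γ.extend 1) z) (dist (γ.extend 0) z) := by
        constructor
        · rw [γ.extend_one, dist_self]; exact hρ.le
        · rw [γ.extend_zero]; exact hyr.le
      obtain ⟨τ, hτIcc, hτeq⟩ := himg hedge
      have hsphmem : γ.extend τ ∈ sphere z ρ := hτeq
      have h1 := hx₁min hsphmem
      have h2 : V (γ.extend τ) ≤ b := by
        rw [γ.extend_apply hτIcc]
        exact hγ _
      exact le_trans h1 h2
    rw [hyOV.1] at hch
    linarith

/-- If `V` is `C²` and `z` is a saddle, then the Hessian of `V` at `z` has at least one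
eigenvalue `≤ 0`. -/
theorem saddle_hessian_has_nonpos_eigenvalue {d : ℕ} (V : EuclideanSpace ℝ (Fin d) → ℝ)
    (hV : ContDiff ℝ 2 V) (z : EuclideanSpace ℝ (Fin d)) (hz : IsSaddle V z) :
    ∃ μ : ℝ, μ ≤ 0 ∧ ∃ v : Fin d → ℝ, v ≠ 0 ∧
      (hessianMatrix V z).mulVec v = μ • v := by
  by_contra hcon
  push_neg at hcon
  rcases Nat.eq_zero_or_pos d with hd0 | hd
  · subst hd0
    obtain ⟨ε, hε, ⟨y, hy, -⟩, -, -⟩ := hz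
    have hyz : y = z := Subsingleton.elim y z
    exact absurd (hyz ▸ hy.2) (lt_irrefl _)
  · have hH := hess_symm hV z
    have hall : ∀ i, 0 < (hess_symm hV z).eigenvalues i := by
      intro i
      by_contra hnot
      push_neg at hnot
      refine hcon ((hess_symm hV z).eigenvalues i) hnot ⇑((hess_symm hV z).eigenvectorBasis i) ?_
        ((hess_symm hV z).mulVec_eigenvectorBasis i)
      intro h0
      apply (hess_symm hV z).eigenvectorBasis.orthonormal.ne_zero i
      ext j
      exact congrFun h0 j
    by_cases hL : fderiv ℝ V z = 0
    · refine absurd hz (not_isSaddle_of_localmin hd hV hL ?_)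
      intro v hv
      rw [quad_eq hV z v]
      refine posQ hV z hall ⇑v ?_
      intro h0
      apply hv
      ext j
      exact congrFun h0 j
    · exact absurd hz (not_isSaddle_of_fderiv_ne_zero hV hL)
end
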